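/- The map p ↦ Q̃₂(−log(1−q(0)), p) has right derivative at p = 0 (i.e. derivative within [0,1) at 0) equal to (q(1) − q(0)·(1−q(0))) / (1−q(0))². -/

import Mathlib

open Finset

/-- `Q̃₂(ξ,p) = 1 − e^ξ + (1−p)·e^ξ·∑_{j=0}^b q(j)·p^j·e^{jξ}`, the numerator of the
critical-exponent equation for the algorithm class `𝒜₂`. -/
noncomputable def Qt2 (b : ℕ) (q : ℕ → ℝ) (ξ p : ℝ) : ℝ :=
  1 - Real.exp ξ + (1 - p) * Real.exp ξ *
    ∑ j ∈ Finset.range (b + 1), q j * p ^ j * Real.exp (j * ξ)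

/-- The map `p ↦ Q̃₂(−log(1−q(0)), p)` has right derivative at `p = 0` (derivative
within `[0,1)`) equal to `(q(1) − q(0)·(1−q(0))) / (1−q(0))²`. -/
theorem stmt_10 (b : ℕ) (q : ℕ → ℝ)
    (hq : ∀ j, 0 ≤ q j) (hqb : ∀ j, b < j → q j = 0) (hq0 : 0 < q 0)
    (hqsum : ∑ j ∈ Finset.range (b + 1), q j < 1) :
    HasDerivWithinAt (fun p => Qt2 b q (-Real.log (1 - q 0)) p)
      ((q 1 - q 0 * (1 - q 0)) / (1 - q 0) ^ 2) (Set.Ico (0 : ℝ) 1) 0 := by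
  set ξ : ℝ := -Real.log (1 - q 0) with hξ
  have hq0le : q 0 ≤ ∑ j ∈ Finset.range (b + 1), q j :=
    Finset.single_le_sum (fun j _ => hq j) (Finset.mem_range.2 (Nat.succ_pos b))
  have h1q0 : 0 < 1 - q 0 := by linarith
  have hE : Real.exp ξ = (1 - q 0)⁻¹ := by
    rw [hξ, Real.exp_neg, Real.exp_log h1q0]
  -- derivative of the sum at 0
  have h1 : HasDerivAt (fun p : ℝ => ∑ j ∈ Finset.range (b + 1),
      q j * p ^ j * Real.exp (j * ξ))
      (∑ j ∈ Finset.range (b + 1), q j * ((j : ℝ) * 0 ^ (j - 1)) * Real.exp (j * ξ)) 0 := by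
    apply HasDerivAt.fun_sum
    intro j _
    simpa [mul_comm, mul_assoc, mul_left_comm] using
      (((hasDerivAt_pow j (0 : ℝ)).const_mul (q j)).mul_const (Real.exp (j * ξ)))
  have hDval : (∑ j ∈ Finset.range (b + 1), q j * ((j : ℝ) * 0 ^ (j - 1)) * Real.exp (j * ξ))
      = q 1 * Real.exp ξ := by
    rw [Finset.sum_eq_single 1]
    · norm_num
    · intro j _ hj1
      match j, hj1 with
      | 0, _ => simp
      | (k+2), _ => simp
    · intro h1mem
      have : b < 1 := by
        by_contra h
        exact h1mem (Finset.mem_range.2 (by omega))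
      rw [hqb 1 this]; ring
  have hg0 : (∑ j ∈ Finset.range (b + 1), q j * (0:ℝ) ^ j * Real.exp (j * ξ)) = q 0 := by
    rw [Finset.sum_eq_single 0]
    · norm_num
    · intro j _ hj0
      match j, hj0 with
      | (k+1), _ => simp
    · intro h; exact absurd (Finset.mem_range.2 (Nat.succ_pos b)) h
  have h2 : HasDerivAt (fun p : ℝ => (1 - p) * Real.exp ξ) (-Real.exp ξ) 0 := by
    simpa using ((hasDerivAt_id (0:ℝ)).const_sub 1).mul_const (Real.exp ξ)
  have h3 : HasDerivAt (fun p : ℝ => Qt2 b q ξ p)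
      ((-Real.exp ξ) * (∑ j ∈ Finset.range (b + 1), q j * (0:ℝ) ^ j * Real.exp (j * ξ))
        + (1 - 0) * Real.exp ξ * (q 1 * Real.exp ξ)) 0 := by
    unfold Qt2
    exact (h2.mul (hDval ▸ h1)).const_add _
  have hval : (-Real.exp ξ) * (∑ j ∈ Finset.range (b + 1), q j * (0:ℝ) ^ j * Real.exp (j * ξ))
        + (1 - 0) * Real.exp ξ * (q 1 * Real.exp ξ)
      = (q 1 - q 0 * (1 - q 0)) / (1 - q 0) ^ 2 := by
    rw [hg0, hE]
    field_simp
    ring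
  exact (hval ▸ h3).hasDerivWithinAt
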